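/- In the hyperbolic triangle Δ with angles 0, π/3, π/2 (area π/6), the horoball centered at the ideal vertex and tangent to the opposite side covers area 1/2, giving local density (1/2)/(π/6) = 3/π. -/

import Mathlib

open Real

/-- In the triangle `Δ` with angles `0, π/3, π/2` (half of the ideal triangle
with vertices `0, 1, ∞`), the horoball `{Im z ≥ 1}` covers area `1/2`, giving
local density `(1/2)/(π/6) = 3/π`. -/
theorem horoball_piece_area_in_half_triangle :
    (∫ x in (0 : ℝ)..(1 / 2), ∫ y in Set.Ioi (1 : ℝ), (1 : ℝ) / y ^ 2) = 1 / 2 ∧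
    (1 / 2 : ℝ) / (π / 6) = 3 / π := by
  constructor
  · have h : (∫ y in Set.Ioi (1 : ℝ), (1 : ℝ) / y ^ 2) = 1 := by
      have := integral_Ioi_rpow_of_lt (a := -2) (by norm_num) (c := 1) one_pos
      norm_num at this
      calc (∫ y in Set.Ioi (1 : ℝ), (1 : ℝ) / y ^ 2)
          = ∫ y in Set.Ioi (1 : ℝ), y ^ (-2 : ℝ) := by
            apply MeasureTheory.setIntegral_congr_fun measurableSet_Ioi
            intro y hy
            simp only [Set.mem_Ioi] at hy
            have hy0 : (0:ℝ) < y := by linarith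
            simp only []
            rw [Real.rpow_neg hy0.le, Real.rpow_two]
            field_simp
        _ = 1 := by norm_num [this]
    simp only [h]
    simp
  · have : π ≠ 0 := Real.pi_ne_zero
    field_simp
    ring
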